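/- Suppose α_i = −β′_i and β_i = −α′_i for each i = 1, …, n−1. Then the linear map φ : T*g → T*g defined on the basis by φ(z) = (−1)^n z, φ(e_j) = (−1)^{n−j+1} f_j, φ(f_j) = (−1)^{n−j} e_j for j = 1, …, n, and φ(t) = t, is an isomorphism of left-symmetric structures from (T*g, ∆_{(α,β)}) to (T*g, ∆_{(α′,β′)}); in particular it is a Lie algebra automorphism of T*g and satisfies φ(x ∆_{(α,β)} y) = φ(x) ∆_{(α′,β′)} φ(y) for all x, y. -/

import Mathlib

namespace Paper

open Finset

/-- Index type for the basis {z, e_1,…,e_n, f_1,…,f_n, t} of the cotangent Lie algebra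
`T*g` of `g = ℝ ⋉_{J_n(0)} ℝ^n`.  The constructor `Bas.e i` (with `i : Fin n`)
represents the basis vector `e_{i+1}` (math indexing `1,…,n`), similarly `Bas.f i`. -/
inductive Bas (n : ℕ) : Type
  | z : Bas n
  | t : Bas n
  | e : Fin n → Bas n
  | f : Fin n → Bas n
  deriving DecidableEq

/-- The underlying vector space of `T*g`, as coordinate functions on the basis. -/
abbrev V (n : ℕ) : Type := Bas n → ℝ

/-- The basis vectors of `T*g`. -/
noncomputable def bas (n : ℕ) (b : Bas n) : V n := Pi.single b 1

/-- The Lie bracket of `T*g`: the bilinear extension of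
`[t, e_{i+1}] = e_i`, `[t, f_{i+1}] = -f_i`, `[e_{i+1}, f_{n-i+1}] = z` for `i = 1,…,n-1`
(math indexing), all other brackets of basis vectors being zero. -/
noncomputable def bracket (n : ℕ) (x y : V n) : V n := fun b =>
  match b with
  | Bas.z => ∑ i : Fin n, ∑ j : Fin n,
      (if (i : ℕ) + (j : ℕ) = n then
        x (Bas.e i) * y (Bas.f j) - x (Bas.f j) * y (Bas.e i) else 0)
  | Bas.t => 0
  | Bas.e k => if h : (k : ℕ) + 1 < n then
      x Bas.t * y (Bas.e ⟨(k : ℕ) + 1, h⟩) - x (Bas.e ⟨(k : ℕ) + 1, h⟩) * y Bas.t else 0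
  | Bas.f k => if h : (k : ℕ) + 1 < n then
      -(x Bas.t * y (Bas.f ⟨(k : ℕ) + 1, h⟩)) + x (Bas.f ⟨(k : ℕ) + 1, h⟩) * y Bas.t else 0

/-- `αseq α i = α_i = (i(α-1)+1)/((α-1)(i-1)+1)`. -/
noncomputable def αseq (α : ℝ) (i : ℕ) : ℝ :=
  ((i : ℝ) * (α - 1) + 1) / ((α - 1) * ((i : ℝ) - 1) + 1)

/-- `βseq β i = β_i = (i(β+1)-1)/(-(β+1)(i-1)+1)`. -/
noncomputable def βseq (β : ℝ) (i : ℕ) : ℝ :=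
  ((i : ℝ) * (β + 1) - 1) / (-(β + 1) * ((i : ℝ) - 1) + 1)

/-- `γseq n α β i = γ_i = (α-1)((n-i)(β+1)-1)/(n(α-1)(β+1)-(α-1)+β+1)`. -/
noncomputable def γseq (n : ℕ) (α β : ℝ) (i : ℕ) : ℝ :=
  ((α - 1) * (((n : ℝ) - (i : ℝ)) * (β + 1) - 1)) /
    ((n : ℝ) * (α - 1) * (β + 1) - (α - 1) + β + 1)

/-- The standing conditions on `α, β`:
`k(α-1)+1 ≠ 0` and `k(β+1)-1 ≠ 0` for all integers `k ≥ 1`, and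
`n(α-1)(β+1) - α + β + 2 ≠ 0`. -/
def Cond (n : ℕ) (α β : ℝ) : Prop :=
  (∀ k : ℕ, 1 ≤ k → (k : ℝ) * (α - 1) + 1 ≠ 0) ∧
  (∀ k : ℕ, 1 ≤ k → (k : ℝ) * (β + 1) - 1 ≠ 0) ∧
  (n : ℝ) * (α - 1) * (β + 1) - α + β + 2 ≠ 0

/-- The product `∆_{(α,β)}` on `T*g`: the bilinear extension of
`t ∆ e_{i+1} = α_i e_i`, `e_{i+1} ∆ t = (α_i - 1) e_i`, `t ∆ f_{i+1} = β_i f_i`,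
`f_{i+1} ∆ t = (β_i + 1) f_i`, `e_{i+1} ∆ f_{n-i+1} = γ_i z`,
`f_{n-i+1} ∆ e_{i+1} = (γ_i - 1) z` for `i = 1,…,n-1` (math indexing),
all other products of basis vectors being zero. -/
noncomputable def lsa (n : ℕ) (α β : ℝ) (x y : V n) : V n := fun b =>
  match b with
  | Bas.z => ∑ i : Fin n, ∑ j : Fin n,
      (if (i : ℕ) + (j : ℕ) = n then
        γseq n α β (i : ℕ) * (x (Bas.e i) * y (Bas.f j))
          + (γseq n α β (i : ℕ) - 1) * (x (Bas.f j) * y (Bas.e i))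
      else 0)
  | Bas.t => 0
  | Bas.e k => if h : (k : ℕ) + 1 < n then
      αseq α ((k : ℕ) + 1) * (x Bas.t * y (Bas.e ⟨(k : ℕ) + 1, h⟩))
        + (αseq α ((k : ℕ) + 1) - 1) * (x (Bas.e ⟨(k : ℕ) + 1, h⟩) * y Bas.t)
      else 0
  | Bas.f k => if h : (k : ℕ) + 1 < n then
      βseq β ((k : ℕ) + 1) * (x Bas.t * y (Bas.f ⟨(k : ℕ) + 1, h⟩))
        + (βseq β ((k : ℕ) + 1) + 1) * (x (Bas.f ⟨(k : ℕ) + 1, h⟩) * y Bas.t)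
      else 0

/-- `D` is a left-symmetric structure on `T*g`: the associator is symmetric in the
first two arguments and `x∆y - y∆x = [x,y]`. -/
def IsLSA (n : ℕ) (D : V n → V n → V n) : Prop :=
  (∀ x y z : V n, D x (D y z) - D (D x y) z = D y (D x z) - D (D y x) z) ∧
  (∀ x y : V n, D x y - D y x = bracket n x y)

/-- Completeness: every right translation `y ↦ y ∆ x` is nilpotent. -/
def IsComplete (n : ℕ) (D : V n → V n → V n) : Prop :=
  ∀ x : V n, ∃ m : ℕ, ∀ y : V n, (fun w => D w x)^[m] y = 0

/-- Bilinearity of a product. -/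
def IsBilin (n : ℕ) (D : V n → V n → V n) : Prop :=
  (∀ (c : ℝ) (x x' y : V n), D (c • x + x') y = c • D x y + D x' y) ∧
  (∀ (c : ℝ) (x y y' : V n), D x (c • y + y') = c • D x y + D x y')

/-- Two left-symmetric structures on `T*g` are isomorphic if some Lie algebra
automorphism of `T*g` intertwines the products. -/
def LSAIso (n : ℕ) (D D' : V n → V n → V n) : Prop :=
  ∃ φ : V n ≃ₗ[ℝ] V n,
    (∀ x y, φ (bracket n x y) = bracket n (φ x) (φ y)) ∧
    (∀ x y, φ (D x y) = D' (φ x) (φ y))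

/-- The 2-form `ω_λ = t* ∧ z* + ∑ λ_i e_i* ∧ f_{n-i+1}*` with `λ_i = λ - i + 1`. -/
noncomputable def omegaForm (n : ℕ) (lam : ℝ) (x y : V n) : ℝ :=
  (x Bas.t * y Bas.z - x Bas.z * y Bas.t) +
  ∑ i : Fin n, (lam - ((i : ℕ) : ℝ)) *
    (x (Bas.e i) * y (Bas.f ⟨n - 1 - (i : ℕ), by have := i.isLt; omega⟩)
      - x (Bas.f ⟨n - 1 - (i : ℕ), by have := i.isLt; omega⟩) * y (Bas.e i))

/-- Two symplectic forms on `T*g` are symplectomorphic up to homothety if some Lie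
algebra automorphism pulls one back to a nonzero multiple of the other. -/
def SympIso (n : ℕ) (ω ω' : V n → V n → ℝ) : Prop :=
  ∃ φ : V n ≃ₗ[ℝ] V n,
    (∀ x y, φ (bracket n x y) = bracket n (φ x) (φ y)) ∧
    ∃ c : ℝ, c ≠ 0 ∧ ∀ x y, ω' (φ x) (φ y) = c * ω x y

/-- `ω` is a symplectic structure on `T*g`. -/
def IsSymplectic (n : ℕ) (ω : V n → V n → ℝ) : Prop :=
  (∀ (c : ℝ) (x x' y : V n), ω (c • x + x') y = c * ω x y + ω x' y) ∧
  (∀ x y : V n, ω x y = - ω y x) ∧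
  (∀ x : V n, (∀ y, ω x y = 0) → x = 0) ∧
  (∀ x y z : V n, ω x (bracket n y z) + ω y (bracket n z x) + ω z (bracket n x y) = 0)

/-- The linear map `φ : T*g → T*g` with `φ(z) = (-1)^n z`, `φ(e_j) = (-1)^{n-j+1} f_j`,
`φ(f_j) = (-1)^{n-j} e_j` (math indexing `j = 1,…,n`) and `φ(t) = t`, written in
coordinates. -/
noncomputable def phiMap (n : ℕ) (x : V n) : V n := fun b =>
  match b with
  | Bas.z => (-1 : ℝ) ^ n * x Bas.z
  | Bas.t => x Bas.t
  | Bas.e j => (-1 : ℝ) ^ (n - (j : ℕ) - 1) * x (Bas.f j)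
  | Bas.f j => (-1 : ℝ) ^ (n - (j : ℕ)) * x (Bas.e j)


private lemma abab {a b c : ℝ} (h1 : a * a = 1) (h2 : b * b = 1) :
    a * (b * (a * (b * c))) = c := by
  calc a * (b * (a * (b * c))) = (a * a) * ((b * b) * c) := by ring
    _ = c := by rw [h1, h2, one_mul, one_mul]

private lemma negOneSq (m : ℕ) : ((-1 : ℝ)) ^ m * ((-1 : ℝ)) ^ m = 1 := by
  rw [← pow_add, ← two_mul, pow_mul]; norm_num

private lemma gamma_rel (n i j : ℕ) (α β : ℝ)
    (hD : (n : ℝ) * (α - 1) * (β + 1) - α + β + 2 ≠ 0)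
    (hij : i + j = n) :
    γseq n α β i = 1 - γseq n (-β) (-α) j := by
  have hj : (j : ℝ) = (n : ℝ) - (i : ℝ) := by
    have h : ((i + j : ℕ) : ℝ) = (n : ℝ) := by rw [hij]
    push_cast at h; linarith
  have hD1 : ((n : ℝ) * (α - 1) * (β + 1) - (α - 1) + β + 1) ≠ 0 :=
    fun h => hD (by linarith)
  have hD2 : ((n : ℝ) * ((-β) - 1) * ((-α) + 1) - ((-β) - 1) + (-α) + 1) ≠ 0 :=
    fun h => hD (by linear_combination h)
  unfold γseq
  rw [hj]
  rw [show ((n : ℝ) * ((-β) - 1) * ((-α) + 1) - ((-β) - 1) + (-α) + 1)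
      = ((n : ℝ) * (α - 1) * (β + 1) - (α - 1) + β + 1) by ring]
  rw [eq_sub_iff_add_eq, ← add_div, div_eq_one_iff_eq hD1]
  ring

/-- if `α_i = -β'_i` and `β_i = -α'_i` for `i = 1,…,n-1`, then the map
`φ` with `φ(z) = (-1)^n z`, `φ(e_j) = (-1)^{n-j+1} f_j`, `φ(f_j) = (-1)^{n-j} e_j`,
`φ(t) = t` is a Lie algebra automorphism of `T*g` intertwining `∆_{(α,β)}` and
`∆_{(α',β')}`. -/
theorem stmt12 (n : ℕ) (hn : 2 ≤ n) (α β α' β' : ℝ)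
    (hc : Cond n α β) (hc' : Cond n α' β')
    (hsym : ∀ i : ℕ, 1 ≤ i → i ≤ n - 1 → αseq α i = -βseq β' i ∧ βseq β i = -αseq α' i) :
    (∀ (c : ℝ) (x y : V n), phiMap n (c • x + y) = c • phiMap n x + phiMap n y) ∧
    Function.Bijective (phiMap n) ∧
    (∀ x y, phiMap n (bracket n x y) = bracket n (phiMap n x) (phiMap n y)) ∧
    (∀ x y, phiMap n (lsa n α β x y) = lsa n α' β' (phiMap n x) (phiMap n y)) := by
  -- derive α' = -β and β' = -α from hsym at i = 1
  have h1 := hsym 1 le_rfl (by omega)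
  have ea : αseq α 1 = α := by unfold αseq; norm_num
  have eb : βseq β 1 = β := by unfold βseq; norm_num
  have ea' : αseq α' 1 = α' := by unfold αseq; norm_num
  have eb' : βseq β' 1 = β' := by unfold βseq; norm_num
  have hβ'eq : β' = -α := by have h := h1.1; rw [ea, eb'] at h; linarith
  have hα'eq : α' = -β := by have h := h1.2; rw [eb, ea'] at h; linarith
  subst hα'eq; subst hβ'eq
  refine ⟨?_, ?_, ?_, ?_⟩
  · intro c x y; funext b
    cases b <;> simp [phiMap] <;> ring
  · -- bijectivity via φ⁴ = id
    have key : ∀ x, phiMap n (phiMap n (phiMap n (phiMap n x))) = x := by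
      intro x; funext b
      cases b with
      | t => rfl
      | z => exact abab (negOneSq n) (negOneSq n)
      | e j => exact abab (negOneSq _) (negOneSq _)
      | f j => exact abab (negOneSq _) (negOneSq _)
    constructor
    · intro a b hab
      rw [← key a, ← key b, hab]
    · intro y
      exact ⟨phiMap n (phiMap n (phiMap n y)), key y⟩
  · -- bracket compatibility
    intro x y; funext b
    cases b with
    | t => rfl
    | z =>
      simp only [phiMap, bracket, Finset.mul_sum]
      conv_rhs => rw [Finset.sum_comm]
      refine Finset.sum_congr rfl fun u _ => Finset.sum_congr rfl fun v _ => ?_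
      have hv := v.isLt
      by_cases h : (u : ℕ) + (v : ℕ) = n
      · rw [if_pos h, if_pos (show (v : ℕ) + (u : ℕ) = n by omega)]
        obtain ⟨m, hm⟩ : ∃ m, (u : ℕ) = m + 1 := ⟨(u : ℕ) - 1, by omega⟩
        rw [show n - (v : ℕ) - 1 = m from by omega,
            show n - (u : ℕ) = (v : ℕ) from by omega]
        have hpow : ((-1 : ℝ)) ^ n = (-1 : ℝ) ^ m * (-1) * (-1 : ℝ) ^ (v : ℕ) := by
          have hps := congrArg (fun s : ℕ => ((-1 : ℝ)) ^ s)
            (show n = m + 1 + (v : ℕ) from by omega)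
          simp only [pow_add, pow_one] at hps
          exact hps
        rw [hpow]
        ring
      · rw [if_neg h, if_neg (show ¬((v : ℕ) + (u : ℕ) = n) by omega), mul_zero]
    | e k =>
      simp only [phiMap, bracket]
      by_cases hk : (k : ℕ) + 1 < n
      · rw [dif_pos hk, dif_pos hk,
            show n - ((k : ℕ) + 1) - 1 = n - (k : ℕ) - 2 from by omega,
            show n - (k : ℕ) - 1 = (n - (k : ℕ) - 2) + 1 from by omega,
            pow_succ]
        ring
      · rw [dif_neg hk, dif_neg hk, mul_zero]
    | f k =>
      simp only [phiMap, bracket]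
      by_cases hk : (k : ℕ) + 1 < n
      · rw [dif_pos hk, dif_pos hk,
            show n - (k : ℕ) = (n - ((k : ℕ) + 1)) + 1 from by omega,
            pow_succ]
        ring
      · rw [dif_neg hk, dif_neg hk, mul_zero]
  · -- lsa compatibility
    intro x y; funext b
    cases b with
    | t => rfl
    | z =>
      simp only [phiMap, lsa, Finset.mul_sum]
      conv_rhs => rw [Finset.sum_comm]
      refine Finset.sum_congr rfl fun u _ => Finset.sum_congr rfl fun v _ => ?_
      have hv := v.isLt
      by_cases h : (u : ℕ) + (v : ℕ) = n
      · have hg := gamma_rel n (u : ℕ) (v : ℕ) α β hc.2.2 h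
        rw [if_pos h, if_pos (show (v : ℕ) + (u : ℕ) = n by omega), hg]
        obtain ⟨m, hm⟩ : ∃ m, (u : ℕ) = m + 1 := ⟨(u : ℕ) - 1, by omega⟩
        rw [show n - (v : ℕ) - 1 = m from by omega,
            show n - (u : ℕ) = (v : ℕ) from by omega]
        have hpow : ((-1 : ℝ)) ^ n = (-1 : ℝ) ^ m * (-1) * (-1 : ℝ) ^ (v : ℕ) := by
          have hps := congrArg (fun s : ℕ => ((-1 : ℝ)) ^ s)
            (show n = m + 1 + (v : ℕ) from by omega)
          simp only [pow_add, pow_one] at hps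
          exact hps
        rw [hpow]
        ring
      · rw [if_neg h, if_neg (show ¬((v : ℕ) + (u : ℕ) = n) by omega), mul_zero]
    | e k =>
      simp only [phiMap, lsa]
      by_cases hk : (k : ℕ) + 1 < n
      · have hb := (hsym ((k : ℕ) + 1) (by omega) (by omega)).2
        rw [dif_pos hk, dif_pos hk, hb,
            show n - ((k : ℕ) + 1) - 1 = n - (k : ℕ) - 2 from by omega,
            show n - (k : ℕ) - 1 = (n - (k : ℕ) - 2) + 1 from by omega,
            pow_succ]
        ring
      · rw [dif_neg hk, dif_neg hk, mul_zero]
    | f k =>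
      simp only [phiMap, lsa]
      by_cases hk : (k : ℕ) + 1 < n
      · have ha := (hsym ((k : ℕ) + 1) (by omega) (by omega)).1
        rw [dif_pos hk, dif_pos hk, ha,
            show n - (k : ℕ) = (n - ((k : ℕ) + 1)) + 1 from by omega,
            pow_succ]
        ring
      · rw [dif_neg hk, dif_neg hk, mul_zero]


end Paper
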